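/- Let x ∈ ℝ² (the Euclidean plane, EuclideanSpace ℝ (Fin 2)), R > 0, and let u be a real-valued function that is twice continuously differentiable on a neighborhood of the closed ball B̄(x,R). Then the gradient of u at x satisfies ‖∇u(x)‖ ≤ R · (sup_{y ∈ B̄(x,R)} |Δu(y)|) + (4/(π·R)) · (sup_{y : ‖y − x‖ = R} |u(y)|), where Δu denotes the Euclidean Laplacian (sum of the two pure second partial derivatives) and the second supremum is over the boundary circle. -/

import Mathlib

/-- The Euclidean Laplacian on `ℝ²`: the sum of the two pure second partial derivatives. -/
noncomputable def lap2 (u : EuclideanSpace ℝ (Fin 2) → ℝ) (y : EuclideanSpace ℝ (Fin 2)) : ℝ :=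
  ∑ i : Fin 2,
    fderiv ℝ (fun z => fderiv ℝ u z (EuclideanSpace.single i 1)) y (EuclideanSpace.single i 1)

open Real Set MeasureTheory intervalIntegral Topology Filter

namespace Stmt10Aux

local notation "E2" => EuclideanSpace ℝ (Fin 2)

lemma rot_pair (T : E2 →L[ℝ] E2 →L[ℝ] ℝ) (p q : E2) (a b : ℝ) (hab : a^2 + b^2 = 1) :
    T (a•p + b•q) (a•p + b•q) + T ((-b)•p + a•q) ((-b)•p + a•q) = T p p + T q q := by
  simp only [map_add, _root_.map_smul, ContinuousLinearMap.add_apply, ContinuousLinearMap.coe_smul',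
    Pi.smul_apply, smul_eq_mul]
  linear_combination (T p p + T q q) * hab

lemma coord_decomp (y : E2) :
    y = y 0 • EuclideanSpace.single 0 1 + y 1 • EuclideanSpace.single 1 1 := by
  ext i
  fin_cases i <;> simp [EuclideanSpace.single_apply]

lemma norm_coord (p q : ℝ) :
    ‖p • EuclideanSpace.single (0 : Fin 2) (1:ℝ) + q • EuclideanSpace.single (1 : Fin 2) (1:ℝ)‖
      = Real.sqrt (p^2 + q^2) := by
  rw [EuclideanSpace.norm_eq, Fin.sum_univ_two]
  congr 1
  simp [EuclideanSpace.single_apply, sq_abs]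

variable {u : EuclideanSpace ℝ (Fin 2) → ℝ} {U : Set (EuclideanSpace ℝ (Fin 2))}

lemma du_at (hU : IsOpen U) (hu : ContDiffOn ℝ 2 u U) {y : E2} (hy : y ∈ U) :
    HasFDerivAt u (fderiv ℝ u y) y :=
  ((hu.differentiableOn (by norm_num)).differentiableAt (hU.mem_nhds hy)).hasFDerivAt

lemma cd1 (hU : IsOpen U) (hu : ContDiffOn ℝ 2 u U) : ContDiffOn ℝ 1 (fderiv ℝ u) U :=
  hu.fderiv_of_isOpen hU (by norm_num)

lemma d2_at (hU : IsOpen U) (hu : ContDiffOn ℝ 2 u U) {y : E2} (hy : y ∈ U) :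
    HasFDerivAt (fderiv ℝ u) (fderiv ℝ (fderiv ℝ u) y) y :=
  (((cd1 hU hu).differentiableOn (by norm_num)).differentiableAt (hU.mem_nhds hy)).hasFDerivAt

lemma cont_du (hU : IsOpen U) (hu : ContDiffOn ℝ 2 u U) : ContinuousOn (fderiv ℝ u) U :=
  hu.continuousOn_fderiv_of_isOpen hU (by norm_num)

lemma cont_d2 (hU : IsOpen U) (hu : ContDiffOn ℝ 2 u U) :
    ContinuousOn (fderiv ℝ (fderiv ℝ u)) U :=
  (cd1 hU hu).continuousOn_fderiv_of_isOpen hU (by norm_num)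

lemma fderiv_apply_eq (hU : IsOpen U) (hu : ContDiffOn ℝ 2 u U) {y : E2} (hy : y ∈ U) (v : E2) :
    fderiv ℝ (fun z => fderiv ℝ u z v) y = (fderiv ℝ (fderiv ℝ u) y).flip v := by
  have h := (d2_at hU hu hy).clm_apply (hasFDerivAt_const v y)
  simpa using h.fderiv

lemma lap2_eq (hU : IsOpen U) (hu : ContDiffOn ℝ 2 u U) {y : E2} (hy : y ∈ U) :
    lap2 u y = ∑ i : Fin 2,
      fderiv ℝ (fderiv ℝ u) y (EuclideanSpace.single i 1) (EuclideanSpace.single i 1) := by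
  unfold lap2
  refine Finset.sum_congr rfl fun i _ => ?_
  rw [fderiv_apply_eq hU hu hy]
  rfl

section S3
variable {u : EuclideanSpace ℝ (Fin 2) → ℝ} {U : Set (EuclideanSpace ℝ (Fin 2))}

lemma hasDerivAt_line (hU : IsOpen U) (hu : ContDiffOn ℝ 2 u U) (x p : E2) {s : ℝ}
    (h : x + s • p ∈ U) :
    HasDerivAt (fun t => u (x + t • p)) (fderiv ℝ u (x + s • p) p) s := by
  have hc : HasDerivAt (fun t : ℝ => x + t • p) p s := by
    simpa using ((hasDerivAt_id s).smul_const p).const_add x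
  exact (du_at hU hu h).comp_hasDerivAt s hc

lemma hasDerivAt_line2 (hU : IsOpen U) (hu : ContDiffOn ℝ 2 u U) (x p q : E2) {s : ℝ}
    (h : x + s • p ∈ U) :
    HasDerivAt (fun t => fderiv ℝ u (x + t • p) q)
      (fderiv ℝ (fderiv ℝ u) (x + s • p) p q) s := by
  have hc : HasDerivAt (fun t : ℝ => x + t • p) p s := by
    simpa using ((hasDerivAt_id s).smul_const p).const_add x
  have h2 : HasDerivAt (fun t => fderiv ℝ u (x + t • p))
      (fderiv ℝ (fderiv ℝ u) (x + s • p) p) s :=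
    (d2_at hU hu h).comp_hasDerivAt s hc
  simpa using h2.clm_apply (hasDerivAt_const s q)

lemma ang_integral_zero (hU : IsOpen U) (hu : ContDiffOn ℝ 2 u U) (x e₁ e₂ : E2) (s : ℝ)
    (hmem : ∀ θ : ℝ, x + s • (cos θ • e₁ + sin θ • e₂) ∈ U) :
    ∫ θ in (0:ℝ)..(2*π),
      (fderiv ℝ (fderiv ℝ u) (x + s • (cos θ • e₁ + sin θ • e₂))
          (s • ((-sin θ) • e₁ + cos θ • e₂)) (s • ((-sin θ) • e₁ + cos θ • e₂))
        + fderiv ℝ u (x + s • (cos θ • e₁ + sin θ • e₂))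
            (s • ((-cos θ) • e₁ + (-sin θ) • e₂))
        + u (x + s • (cos θ • e₁ + sin θ • e₂))) * cos θ = 0 := by
  set k : ℝ → E2 := fun t => x + s • (cos t • e₁ + sin t • e₂) with hk
  set wv : ℝ → E2 := fun t => (-sin t) • e₁ + cos t • e₂ with hwv
  -- derivative of the curve
  have hkd : ∀ θ : ℝ, HasDerivAt k (s • wv θ) θ := by
    intro θ
    exact ((((Real.hasDerivAt_cos θ).smul_const e₁).add
      ((Real.hasDerivAt_sin θ).smul_const e₂)).const_smul s).const_add x
  have hwd : ∀ θ : ℝ, HasDerivAt (fun t => s • wv t) (s • ((-cos θ) • e₁ + (-sin θ) • e₂)) θ := by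
    intro θ
    exact (((Real.hasDerivAt_sin θ).neg.smul_const e₁).add
      ((Real.hasDerivAt_cos θ).smul_const e₂)).const_smul s
  have hud : ∀ θ : ℝ, HasDerivAt (fun t => u (k t)) (fderiv ℝ u (k θ) (s • wv θ)) θ := by
    intro θ
    exact (du_at hU hu (hmem θ)).comp_hasDerivAt θ (hkd θ)
  have hAd : ∀ θ : ℝ, HasDerivAt (fun t => fderiv ℝ u (k t))
      (fderiv ℝ (fderiv ℝ u) (k θ) (s • wv θ)) θ := by
    intro θ
    exact (d2_at hU hu (hmem θ)).comp_hasDerivAt θ (hkd θ)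
  -- Φ and its derivative
  set Φ : ℝ → ℝ := fun t => fderiv ℝ u (k t) (s • wv t) * cos t + u (k t) * sin t with hΦ
  have hΦd : ∀ θ : ℝ, HasDerivAt Φ
      ((fderiv ℝ (fderiv ℝ u) (k θ) (s • wv θ) (s • wv θ)
        + fderiv ℝ u (k θ) (s • ((-cos θ) • e₁ + (-sin θ) • e₂))
        + u (k θ)) * cos θ) θ := by
    intro θ
    have h1 : HasDerivAt (fun t => fderiv ℝ u (k t) (s • wv t))
        (fderiv ℝ (fderiv ℝ u) (k θ) (s • wv θ) (s • wv θ)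
          + fderiv ℝ u (k θ) (s • ((-cos θ) • e₁ + (-sin θ) • e₂))) θ :=
      (hAd θ).clm_apply (hwd θ)
    have h2 := (h1.mul (Real.hasDerivAt_cos θ)).add
      ((hud θ).mul (Real.hasDerivAt_sin θ))
    exact h2.congr_deriv (by ring)
  -- continuity of the derivative, for interval integrability
  have hkc : Continuous k := by fun_prop
  have hwc : Continuous fun t => s • wv t := by fun_prop
  have hcont : Continuous fun θ =>
      (fderiv ℝ (fderiv ℝ u) (k θ) (s • wv θ) (s • wv θ)
        + fderiv ℝ u (k θ) (s • ((-cos θ) • e₁ + (-sin θ) • e₂))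
        + u (k θ)) * cos θ := by
    have hB : Continuous fun θ => fderiv ℝ (fderiv ℝ u) (k θ) :=
      (cont_d2 hU hu).comp_continuous hkc hmem
    have hD : Continuous fun θ => fderiv ℝ u (k θ) :=
      (cont_du hU hu).comp_continuous hkc hmem
    have hO : Continuous fun θ => u (k θ) :=
      (hu.continuousOn).comp_continuous hkc hmem
    have hw2 : Continuous fun t : ℝ => s • ((-cos t) • e₁ + (-sin t) • e₂) := by fun_prop
    exact (((hB.clm_apply hwc).clm_apply hwc).add ((hD.clm_apply hw2).add hO)).mul
      Real.continuous_cos |>.congr (by intro t; simp only [Pi.add_apply, Pi.mul_apply]; ring)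
  rw [intervalIntegral.integral_eq_sub_of_hasDerivAt (fun t _ => hΦd t)
    (hcont.intervalIntegrable 0 (2*π))]
  simp [hΦ, hk, hwv]
end S3
section S4
variable {u : EuclideanSpace ℝ (Fin 2) → ℝ} {U : Set (EuclideanSpace ℝ (Fin 2))}

lemma cont_lap2 (hU : IsOpen U) (hu : ContDiffOn ℝ 2 u U) : ContinuousOn (lap2 u) U := by
  have : ContinuousOn (fun y =>
      fderiv ℝ (fderiv ℝ u) y (EuclideanSpace.single 0 1) (EuclideanSpace.single 0 1)
      + fderiv ℝ (fderiv ℝ u) y (EuclideanSpace.single 1 1) (EuclideanSpace.single 1 1)) U :=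
    (((cont_d2 hU hu).clm_apply continuousOn_const).clm_apply continuousOn_const).add
      (((cont_d2 hU hu).clm_apply continuousOn_const).clm_apply continuousOn_const)
  exact this.congr fun y hy => by rw [lap2_eq hU hu hy, Fin.sum_univ_two]

lemma trace_eq (hU : IsOpen U) (hu : ContDiffOn ℝ 2 u U) {y : E2} (hy : y ∈ U)
    (c d : ℝ) (hcd : c^2 + d^2 = 1) (e₁ e₂ : E2)
    (he₁ : e₁ = c • EuclideanSpace.single 0 1 + d • EuclideanSpace.single 1 1)
    (he₂ : e₂ = (-d) • EuclideanSpace.single 0 1 + c • EuclideanSpace.single 1 1)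
    (a b : ℝ) (hab : a^2 + b^2 = 1) :
    fderiv ℝ (fderiv ℝ u) y (a•e₁ + b•e₂) (a•e₁ + b•e₂)
      + fderiv ℝ (fderiv ℝ u) y ((-b)•e₁ + a•e₂) ((-b)•e₁ + a•e₂) = lap2 u y := by
  rw [rot_pair _ e₁ e₂ a b hab]
  subst he₁ he₂
  rw [rot_pair _ _ _ c d hcd, lap2_eq hU hu hy, Fin.sum_univ_two]

lemma scalar_id (Tvv Tww Dv uy ux cθ s : ℝ) (hs : s ≠ 0) :
    (Tvv + Tww) * cθ - (Tvv + Dv / s - (uy - ux) / s^2) * cθ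
      = (1/s^2) * ((s^2 * Tww + (-s) * Dv + uy) * cθ - ux * cθ) := by
  field_simp
  ring

lemma J1 (hU : IsOpen U) (hu : ContDiffOn ℝ 2 u U) (x : E2)
    (c d : ℝ) (hcd : c^2 + d^2 = 1) (e₁ e₂ : E2)
    (he₁ : e₁ = c • EuclideanSpace.single 0 1 + d • EuclideanSpace.single 1 1)
    (he₂ : e₂ = (-d) • EuclideanSpace.single 0 1 + c • EuclideanSpace.single 1 1)
    {s : ℝ} (hs : s ≠ 0)
    (hmem : ∀ θ : ℝ, x + s • (cos θ • e₁ + sin θ • e₂) ∈ U) :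
    ∫ θ in (0:ℝ)..(2*π), lap2 u (x + s • (cos θ • e₁ + sin θ • e₂)) * cos θ
      = ∫ θ in (0:ℝ)..(2*π),
        (fderiv ℝ (fderiv ℝ u) (x + s • (cos θ • e₁ + sin θ • e₂))
            (cos θ • e₁ + sin θ • e₂) (cos θ • e₁ + sin θ • e₂)
          + fderiv ℝ u (x + s • (cos θ • e₁ + sin θ • e₂)) (cos θ • e₁ + sin θ • e₂) / s
          - (u (x + s • (cos θ • e₁ + sin θ • e₂)) - u x) / s^2) * cos θ := by
  set k : ℝ → E2 := fun t => x + s • (cos t • e₁ + sin t • e₂) with hk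
  have hkc : Continuous k := by fun_prop
  have hB : Continuous fun θ => fderiv ℝ (fderiv ℝ u) (k θ) :=
    (cont_d2 hU hu).comp_continuous hkc hmem
  have hD : Continuous fun θ => fderiv ℝ u (k θ) :=
    (cont_du hU hu).comp_continuous hkc hmem
  have hO : Continuous fun θ => u (k θ) :=
    ContinuousOn.comp_continuous (hu.continuousOn) hkc hmem
  have hL : Continuous fun θ => lap2 u (k θ) :=
    (cont_lap2 hU hu).comp_continuous hkc hmem
  have hv : Continuous fun t : ℝ => cos t • e₁ + sin t • e₂ := by fun_prop
  have hKc : Continuous fun θ =>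
      (fderiv ℝ (fderiv ℝ u) (k θ) (cos θ • e₁ + sin θ • e₂) (cos θ • e₁ + sin θ • e₂)
        + fderiv ℝ u (k θ) (cos θ • e₁ + sin θ • e₂) / s
        - (u (k θ) - u x) / s^2) * cos θ := by
    apply Continuous.mul _ Real.continuous_cos
    exact (((hB.clm_apply hv).clm_apply hv).add (((hD.clm_apply hv)).div_const s)).sub
      ((hO.sub continuous_const).div_const (s^2))
  have key := ang_integral_zero hU hu x e₁ e₂ s hmem
  have hcos : ∫ θ in (0:ℝ)..(2*π), u x * cos θ = 0 := by
    rw [intervalIntegral.integral_const_mul, integral_cos]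
    simp
  rw [← sub_eq_zero, ← intervalIntegral.integral_sub (f := fun θ => lap2 u (k θ) * cos θ)
    ((hL.mul Real.continuous_cos).intervalIntegrable _ _) (hKc.intervalIntegrable _ _)]
  have hgcont : Continuous fun θ =>
      (fderiv ℝ (fderiv ℝ u) (k θ) (s • ((-sin θ) • e₁ + cos θ • e₂))
          (s • ((-sin θ) • e₁ + cos θ • e₂))
        + fderiv ℝ u (k θ) (s • ((-cos θ) • e₁ + (-sin θ) • e₂))
        + u (k θ)) * cos θ := by
    have hw : Continuous fun t : ℝ => s • ((-sin t) • e₁ + cos t • e₂) := by fun_prop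
    have hw2 : Continuous fun t : ℝ => s • ((-cos t) • e₁ + (-sin t) • e₂) := by fun_prop
    exact ((((hB.clm_apply hw).clm_apply hw).add (hD.clm_apply hw2)).add hO).mul
      Real.continuous_cos
  have congr1 : ∀ θ : ℝ,
      lap2 u (k θ) * cos θ
        - (fderiv ℝ (fderiv ℝ u) (k θ) (cos θ • e₁ + sin θ • e₂) (cos θ • e₁ + sin θ • e₂)
          + fderiv ℝ u (k θ) (cos θ • e₁ + sin θ • e₂) / s
          - (u (k θ) - u x) / s^2) * cos θ
      = (1/s^2) * ((fderiv ℝ (fderiv ℝ u) (k θ) (s • ((-sin θ) • e₁ + cos θ • e₂))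
          (s • ((-sin θ) • e₁ + cos θ • e₂))
        + fderiv ℝ u (k θ) (s • ((-cos θ) • e₁ + (-sin θ) • e₂))
        + u (k θ)) * cos θ - u x * cos θ) := by
    intro θ
    have htr := trace_eq hU hu (hmem θ) c d hcd e₁ e₂ he₁ he₂ (cos θ) (sin θ)
      (Real.cos_sq_add_sin_sq θ)
    have hsm1 : fderiv ℝ (fderiv ℝ u) (k θ) (s • ((-sin θ) • e₁ + cos θ • e₂))
        (s • ((-sin θ) • e₁ + cos θ • e₂))
        = s^2 * fderiv ℝ (fderiv ℝ u) (k θ) ((-sin θ) • e₁ + cos θ • e₂)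
            ((-sin θ) • e₁ + cos θ • e₂) := by
      simp only [_root_.map_smul, ContinuousLinearMap.smul_apply, smul_eq_mul]
      ring
    have hvec : s • ((-cos θ) • e₁ + (-sin θ) • e₂) = (-s) • (cos θ • e₁ + sin θ • e₂) := by
      module
    have hsm2 : fderiv ℝ u (k θ) (s • ((-cos θ) • e₁ + (-sin θ) • e₂))
        = (-s) * fderiv ℝ u (k θ) (cos θ • e₁ + sin θ • e₂) := by
      rw [hvec, _root_.map_smul]
      simp only [smul_eq_mul]
    rw [hsm1, hsm2, ← htr]
    exact scalar_id _ _ _ _ _ _ _ hs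
  rw [intervalIntegral.integral_congr (g := fun θ =>
      (1/s^2) * ((fderiv ℝ (fderiv ℝ u) (k θ) (s • ((-sin θ) • e₁ + cos θ • e₂))
          (s • ((-sin θ) • e₁ + cos θ • e₂))
        + fderiv ℝ u (k θ) (s • ((-cos θ) • e₁ + (-sin θ) • e₂))
        + u (k θ)) * cos θ - u x * cos θ)) (fun θ _ => congr1 θ),
    intervalIntegral.integral_const_mul,
    intervalIntegral.integral_sub (g := fun θ => u x * cos θ) (hgcont.intervalIntegrable _ _)
      ((continuous_const.mul Real.continuous_cos).intervalIntegrable _ _),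
    key, hcos]
  simp
end S4
section S5
variable {u : EuclideanSpace ℝ (Fin 2) → ℝ} {U : Set (EuclideanSpace ℝ (Fin 2))}

lemma scalar_id2 (a b c t R : ℝ) (ht : t ≠ 0) (hR : R ≠ 0) :
    (c + (b * t - a * 1) / t^2) * (1 - t^2/R^2)
      + ((b + a/t) * (-(2*t)/R^2) + 2/R^2 * (1 * a + t * b))
    = (c + b / t - a / t^2) * (1 - t^2/R^2) := by
  field_simp
  ring

lemma L1 (hU : IsOpen U) (hu : ContDiffOn ℝ 2 u U) (x p : EuclideanSpace ℝ (Fin 2))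
    {R : ℝ} (hR : 0 < R) (hmem : ∀ s ∈ Icc (0:ℝ) R, x + s • p ∈ U) :
    ∫ s in (0:ℝ)..R,
      (fderiv ℝ (fderiv ℝ u) (x + s • p) p p + fderiv ℝ u (x + s • p) p / s
        - (u (x + s • p) - u x) / s^2) * (1 - s^2/R^2)
      = 2 / R * (u (x + R • p) - u x) - 2 * fderiv ℝ u x p := by
  set g : ℝ → ℝ := fun s => u (x + s • p) - u x with hgdef
  set g1 : ℝ → ℝ := fun s => fderiv ℝ u (x + s • p) p with hg1def
  set g2 : ℝ → ℝ := fun s => fderiv ℝ (fderiv ℝ u) (x + s • p) p p with hg2def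
  have hmem' : ∀ s ∈ Icc (0:ℝ) R, x + s • p ∈ U := hmem
  have hgd : ∀ s ∈ Icc (0:ℝ) R, HasDerivAt g (g1 s) s := fun s hs =>
    (hasDerivAt_line hU hu x p (hmem' s hs)).sub_const (u x)
  have hg1d : ∀ s ∈ Icc (0:ℝ) R, HasDerivAt g1 (g2 s) s := fun s hs =>
    hasDerivAt_line2 hU hu x p p (hmem' s hs)
  have hg0 : g 0 = 0 := by simp [hgdef]
  have hd0 : g1 0 = fderiv ℝ u x p := by simp [hg1def]
  -- continuity on Icc
  have hlin : Continuous fun s : ℝ => x + s • p := by fun_prop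
  have hgc : ContinuousOn g (Icc 0 R) :=
    ((hu.continuousOn.comp hlin.continuousOn (fun s hs => hmem' s hs)).sub continuousOn_const)
  have hg1c : ContinuousOn g1 (Icc 0 R) :=
    ((cont_du hU hu).comp hlin.continuousOn (fun s hs => hmem' s hs)).clm_apply
      continuousOn_const
  have hg2c : ContinuousOn g2 (Icc 0 R) :=
    (((cont_d2 hU hu).comp hlin.continuousOn (fun s hs => hmem' s hs)).clm_apply
      continuousOn_const).clm_apply continuousOn_const
  -- uniform bound on g2
  obtain ⟨C, hC⟩ := (isCompact_Icc (a := (0:ℝ)) (b := R)).exists_bound_of_continuousOn hg2c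
  have hC0 : 0 ≤ C := le_trans (norm_nonneg _) (hC 0 (by constructor <;> [rfl; exact hR.le]))
  -- bound |s * g1 s - g s| ≤ C * s^2 on Icc
  have hrho : ∀ s ∈ Icc (0:ℝ) R, |s * g1 s - g s| ≤ C * s^2 := by
    intro s₀ hs₀
    have hsub : Icc (0:ℝ) s₀ ⊆ Icc 0 R := Icc_subset_Icc le_rfl hs₀.2
    have hρd : ∀ t ∈ Icc (0:ℝ) s₀,
        HasDerivWithinAt (fun t => t * g1 t - g t) (t * g2 t) (Icc 0 s₀) t := by
      intro t ht
      have h := ((hasDerivAt_id t).mul (hg1d t (hsub ht))).sub (hgd t (hsub ht))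
      simp only [id_eq] at h
      have heq : (1 * g1 t + t * g2 t) - g1 t = t * g2 t := by ring
      rw [heq] at h
      exact h.hasDerivWithinAt
    have hb : ∀ t ∈ Icc (0:ℝ) s₀, ‖t * g2 t‖ ≤ C * s₀ := by
      intro t ht
      have h1 : ‖t * g2 t‖ = |t| * ‖g2 t‖ := by rw [Real.norm_eq_abs, abs_mul]; rfl
      rw [h1]
      have := hC t (hsub ht)
      have ht0 : |t| ≤ s₀ := by rw [abs_of_nonneg ht.1]; exact ht.2
      calc |t| * ‖g2 t‖ ≤ s₀ * C :=
        mul_le_mul ht0 this (norm_nonneg _) (le_trans ht.1 ht.2)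
      _ = C * s₀ := mul_comm _ _
    have key := (convex_Icc (0:ℝ) s₀).norm_image_sub_le_of_norm_hasDerivWithin_le
      hρd hb (left_mem_Icc.2 hs₀.1) (right_mem_Icc.2 hs₀.1)
    have h0 : (0:ℝ) * g1 0 - g 0 = 0 := by rw [hg0]; ring
    rw [h0, sub_zero, sub_zero] at key
    calc |s₀ * g1 s₀ - g s₀| ≤ C * s₀ * ‖s₀‖ := key
    _ = C * s₀^2 := by rw [Real.norm_eq_abs, abs_of_nonneg hs₀.1]; ring
  -- the function F
  set φ : ℝ → ℝ := fun s => if s = 0 then fderiv ℝ u x p else g s / s with hφdef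
  set F : ℝ → ℝ := fun s => (g1 s + φ s) * (1 - s^2/R^2) + 2/R^2 * s * g s with hFdef
  have hF0 : F 0 = 2 * fderiv ℝ u x p := by
    simp [hFdef, hφdef, hd0]
    ring
  have hFR : F R = 2 / R * g R := by
    have h1 : (1 : ℝ) - R^2/R^2 = 0 := by field_simp; ring
    simp only [hFdef, h1, mul_zero, zero_add]
    field_simp
  -- continuity of φ on Icc
  have hφc : ContinuousOn φ (Icc 0 R) := by
    intro t ht
    rcases eq_or_ne t 0 with rfl | hne
    · have hd : HasDerivAt g (fderiv ℝ u x p) 0 := by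
        have := hgd 0 (left_mem_Icc.2 hR.le)
        rwa [hd0] at this
      have hslope := hasDerivAt_iff_tendsto_slope.1 hd
      have hsub2 : 𝓝[Icc (0:ℝ) R \ {0}] 0 ≤ 𝓝[≠] (0:ℝ) :=
        nhdsWithin_mono _ (fun y hy => hy.2)
      have htend : Filter.Tendsto (fun s => if s = 0 then fderiv ℝ u x p else g s / s)
          (𝓝[Icc (0:ℝ) R \ {0}] 0) (𝓝 (fderiv ℝ u x p)) := by
        apply Filter.Tendsto.congr' _ (hslope.mono_left hsub2)
        filter_upwards [self_mem_nhdsWithin] with s hs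
        have hs0 : s ≠ 0 := by simpa using hs.2
        rw [slope_def_field, hg0, if_neg hs0, sub_zero, sub_zero]
      have hφ0 : φ 0 = fderiv ℝ u x p := by simp [hφdef]
      rw [← continuousWithinAt_diff_self, ContinuousWithinAt, hφ0]
      exact htend
    · have hcont : ContinuousWithinAt (fun s => g s / s) (Icc 0 R) t :=
        (hgc t ht).div (continuousWithinAt_id) hne
      apply hcont.congr_of_eventuallyEq _ (by rw [hφdef]; simp [if_neg hne])
      have : {s : ℝ | s ≠ 0} ∈ 𝓝[Icc (0:ℝ) R] t :=
        mem_nhdsWithin_of_mem_nhds (isOpen_ne.mem_nhds hne)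
      filter_upwards [this] with s hs
      rw [hφdef]
      simp [if_neg hs]
  have hFc : ContinuousOn F (Icc 0 R) := by
    apply ContinuousOn.add
    · exact (hg1c.add hφc).mul (by fun_prop)
    · exact (continuousOn_const.mul continuousOn_id).mul hgc
  -- derivative of F on Ioo
  have hF' : ∀ t ∈ Ioo (0:ℝ) R, HasDerivAt F
      ((g2 t + g1 t / t - g t / t^2) * (1 - t^2/R^2)) t := by
    intro t ht
    have htne : t ≠ 0 := ne_of_gt ht.1
    have htmem : t ∈ Icc (0:ℝ) R := ⟨ht.1.le, ht.2.le⟩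
    have hdiv : HasDerivAt (fun s => g s / s) ((g1 t * t - g t * 1) / t^2) t :=
      (hgd t htmem).div (hasDerivAt_id t) htne
    have hW : HasDerivAt (fun s : ℝ => 1 - s^2/R^2) (-(2*t)/R^2) t := by
      have h := ((hasDerivAt_pow 2 t).div_const (R^2)).const_sub 1
      exact h.congr_deriv (by rw [show (2:ℕ) - 1 = 1 from rfl, pow_one]; push_cast; ring)
    have hr : HasDerivAt (fun s : ℝ => 2/R^2 * s * g s)
        ((2/R^2) * (1 * g t + t * g1 t)) t := by
      have h := ((hasDerivAt_id t).mul (hgd t htmem)).const_mul (2/R^2)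
      simp only [id_eq, Pi.mul_apply] at h
      exact h.congr_of_eventuallyEq (Filter.Eventually.of_forall fun s => by ring)
    have hmain := (((hg1d t htmem).add hdiv).mul hW).add hr
    have heq : F =ᶠ[nhds t] fun s => (g1 s + g s / s) * (1 - s^2/R^2) + 2/R^2 * s * g s := by
      filter_upwards [isOpen_ne.mem_nhds htne] with s hs
      simp only [hFdef, hφdef, if_neg hs]
    rw [show ((g2 t + g1 t / t - g t / t^2) * (1 - t^2/R^2))
        = ((g2 t + (g1 t * t - g t * 1) / t^2) * (1 - t^2/R^2)
          + ((g1 t + g t/t) * (-(2*t)/R^2) + 2/R^2 * (1 * g t + t * g1 t)))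
      from (scalar_id2 (g t) (g1 t) (g2 t) t R htne hR.ne').symm]
    apply HasDerivAt.congr_of_eventuallyEq _ heq
    exact hmain.congr_deriv (by simp only [Pi.add_apply]; ring)
  -- interval integrability of the integrand
  have hKcont : ContinuousOn
      (fun s => (g2 s + g1 s / s - g s / s^2) * (1 - s^2/R^2)) (Ioc 0 R) := by
    have h1 : ContinuousOn g (Ioc 0 R) := hgc.mono Ioc_subset_Icc_self
    have h2 : ContinuousOn g1 (Ioc 0 R) := hg1c.mono Ioc_subset_Icc_self
    have h3 : ContinuousOn g2 (Ioc 0 R) := hg2c.mono Ioc_subset_Icc_self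
    refine ContinuousOn.mul ?_ (by fun_prop)
    exact (h3.add (h2.div continuousOn_id (fun s hs => ne_of_gt hs.1))).sub
      (h1.div (by fun_prop) (fun s hs => pow_ne_zero 2 (ne_of_gt hs.1)))
  have hbound : ∀ s ∈ Ioc (0:ℝ) R,
      ‖(g2 s + g1 s / s - g s / s^2) * (1 - s^2/R^2)‖ ≤ 2 * C := by
    intro s hs
    have hs0 : 0 < s := hs.1
    have hsic : s ∈ Icc (0:ℝ) R := ⟨hs0.le, hs.2⟩
    have h1 : |g1 s / s - g s / s^2| ≤ C := by
      have : g1 s / s - g s / s^2 = (s * g1 s - g s) / s^2 := by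
        field_simp
      rw [this, abs_div, abs_of_nonneg (sq_nonneg s)]
      rw [div_le_iff₀ (by positivity)]
      calc |s * g1 s - g s| ≤ C * s^2 := hrho s hsic
      _ = C * s^2 := rfl
    have h2 : |g2 s| ≤ C := hC s hsic
    have h3 : |1 - s^2/R^2| ≤ 1 := by
      have hR2 : (0:ℝ) < R^2 := by positivity
      have ha : s^2/R^2 ≤ 1 := by
        rw [div_le_one hR2]
        nlinarith [hs.2, hs0.le]
      have hb : 0 ≤ s^2/R^2 := by positivity
      rw [abs_le]
      constructor <;> linarith
    calc ‖(g2 s + g1 s / s - g s / s^2) * (1 - s^2/R^2)‖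
        = |g2 s + (g1 s / s - g s / s^2)| * |1 - s^2/R^2| := by
          rw [Real.norm_eq_abs, abs_mul]; ring_nf
      _ ≤ (|g2 s| + |g1 s / s - g s / s^2|) * 1 :=
          mul_le_mul (abs_add_le _ _) h3 (abs_nonneg _) (by positivity)
      _ ≤ (C + C) * 1 := by
          apply mul_le_mul_of_nonneg_right _ zero_le_one
          exact add_le_add h2 h1
      _ = 2 * C := by ring
  have hInt : IntervalIntegrable
      (fun s => (g2 s + g1 s / s - g s / s^2) * (1 - s^2/R^2)) volume 0 R := by
    rw [intervalIntegrable_iff_integrableOn_Ioc_of_le hR.le]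
    refine ⟨hKcont.aestronglyMeasurable measurableSet_Ioc, ?_⟩
    apply HasFiniteIntegral.restrict_of_bounded (C := 2*C) measure_Ioc_lt_top
    exact (ae_restrict_iff' measurableSet_Ioc).2 (Filter.Eventually.of_forall hbound)
  have := intervalIntegral.integral_eq_sub_of_hasDeriv_right_of_le hR.le hFc
    (fun t ht => (hF' t ht).hasDerivWithinAt) hInt
  rw [this, hFR, hF0]
end S5
section S6

lemma integral_abs_cos : ∫ θ in (0:ℝ)..(2*π), |cos θ| = 4 := by
  have key : ∀ a b : ℝ, a ≤ b → (∀ θ ∈ Icc a b, 0 ≤ cos θ) →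
      ∫ θ in a..b, |cos θ| = sin b - sin a := by
    intro a b hab hpos
    rw [intervalIntegral.integral_congr (g := cos) (fun θ hθ => by
      rw [uIcc_of_le hab] at hθ
      exact abs_of_nonneg (hpos θ hθ)), integral_cos]
  have key2 : ∀ a b : ℝ, a ≤ b → (∀ θ ∈ Icc a b, cos θ ≤ 0) →
      ∫ θ in a..b, |cos θ| = -(sin b - sin a) := by
    intro a b hab hneg
    rw [intervalIntegral.integral_congr (g := fun θ => -cos θ) (fun θ hθ => by
      rw [uIcc_of_le hab] at hθ
      exact abs_of_nonpos (hneg θ hθ)), intervalIntegral.integral_neg, integral_cos]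
  have hpi : (0:ℝ) < π := pi_pos
  have h1 : ∫ θ in (0:ℝ)..(π/2), |cos θ| = 1 := by
    rw [key 0 (π/2) (by linarith) (fun θ hθ =>
      Real.cos_nonneg_of_mem_Icc ⟨by linarith [hθ.1], hθ.2⟩)]
    simp
  have h2 : ∫ θ in (π/2)..(3*π/2), |cos θ| = 2 := by
    rw [key2 (π/2) (3*π/2) (by linarith) (fun θ hθ =>
      Real.cos_nonpos_of_pi_div_two_le_of_le hθ.1 (by linarith [hθ.2]))]
    have : (3*π/2 : ℝ) = π + π/2 := by ring
    rw [this, Real.sin_pi_div_two, Real.sin_add]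
    simp
    norm_num
  have h3 : ∫ θ in (3*π/2)..(2*π), |cos θ| = 1 := by
    rw [key (3*π/2) (2*π) (by linarith) (fun θ hθ => by
      have : cos θ = cos (θ - 2*π) := (Real.cos_sub_two_pi θ).symm
      rw [this]
      exact Real.cos_nonneg_of_mem_Icc ⟨by linarith [hθ.1], by linarith [hθ.2]⟩)]
    have : (3*π/2 : ℝ) = π + π/2 := by ring
    rw [Real.sin_two_pi, this, Real.sin_add, Real.sin_pi_div_two]
    simp
  have hi : ∀ a b : ℝ, IntervalIntegrable (fun θ => |cos θ|) volume a b :=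
    fun a b => (Real.continuous_cos.abs).intervalIntegrable a b
  have hsplit2 : ∫ θ in (π/2)..(2*π), |cos θ| = 3 := by
    rw [← intervalIntegral.integral_add_adjacent_intervals (b := 3*π/2) (hi _ _) (hi _ _),
      h2, h3]
    norm_num
  rw [← intervalIntegral.integral_add_adjacent_intervals (b := π/2) (hi _ _) (hi _ _),
    h1, hsplit2]
  norm_num

lemma integral_weight {R : ℝ} (hR : 0 < R) :
    ∫ s in (0:ℝ)..R, (1 - s^2/R^2) = 2*R/3 := by
  have h1 : ∫ s in (0:ℝ)..R, (1 - s^2/R^2)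
      = (∫ s in (0:ℝ)..R, (1:ℝ)) - (∫ s in (0:ℝ)..R, s^2) / R^2 := by
    rw [← intervalIntegral.integral_div, ← intervalIntegral.integral_sub
      intervalIntegrable_const (by apply Continuous.intervalIntegrable; fun_prop)]
  rw [h1, integral_pow]
  simp
  field_simp
  ring

lemma integral_cos_zero : ∫ θ in (0:ℝ)..(2*π), cos θ = 0 := by
  rw [integral_cos]; simp

lemma integral_cos_sq' : ∫ θ in (0:ℝ)..(2*π), cos θ ^ 2 = π := by
  rw [integral_cos_sq]
  simp

lemma integral_sin_cos : ∫ θ in (0:ℝ)..(2*π), sin θ * cos θ = 0 := by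
  rw [integral_sin_mul_cos₁]
  simp

end S6
section S7
variable {u : EuclideanSpace ℝ (Fin 2) → ℝ} {U : Set (EuclideanSpace ℝ (Fin 2))}

-- reusable ρ-bound
lemma rho_bound (hU : IsOpen U) (hu : ContDiffOn ℝ 2 u U) (x p : EuclideanSpace ℝ (Fin 2))
    {R C : ℝ} (hmem : ∀ s ∈ Icc (0:ℝ) R, x + s • p ∈ U)
    (hC : ∀ s ∈ Icc (0:ℝ) R, ‖fderiv ℝ (fderiv ℝ u) (x + s • p) p p‖ ≤ C) :
    ∀ s ∈ Icc (0:ℝ) R,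
      |s * fderiv ℝ u (x + s • p) p - (u (x + s • p) - u x)| ≤ C * s^2 := by
  intro s₀ hs₀
  set g : ℝ → ℝ := fun s => u (x + s • p) - u x with hgdef
  set g1 : ℝ → ℝ := fun s => fderiv ℝ u (x + s • p) p with hg1def
  set g2 : ℝ → ℝ := fun s => fderiv ℝ (fderiv ℝ u) (x + s • p) p p with hg2def
  have hsub : Icc (0:ℝ) s₀ ⊆ Icc 0 R := Icc_subset_Icc le_rfl hs₀.2
  have hρd : ∀ t ∈ Icc (0:ℝ) s₀,
      HasDerivWithinAt (fun t => t * g1 t - g t) (t * g2 t) (Icc 0 s₀) t := by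
    intro t ht
    have h := ((hasDerivAt_id t).mul (hasDerivAt_line2 hU hu x p p (hmem t (hsub ht)))).sub
      ((hasDerivAt_line hU hu x p (hmem t (hsub ht))).sub_const (u x))
    simp only [id_eq] at h
    have heq : (1 * g1 t + t * g2 t) - g1 t = t * g2 t := by ring
    rw [heq] at h
    exact h.hasDerivWithinAt
  have hb : ∀ t ∈ Icc (0:ℝ) s₀, ‖t * g2 t‖ ≤ C * s₀ := by
    intro t ht
    have h1 : ‖t * g2 t‖ = |t| * ‖g2 t‖ := by rw [Real.norm_eq_abs, abs_mul]; rfl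
    rw [h1]
    have hC0 : 0 ≤ C := le_trans (norm_nonneg _) (hC t (hsub ht))
    have ht0 : |t| ≤ s₀ := by rw [abs_of_nonneg ht.1]; exact ht.2
    calc |t| * ‖g2 t‖ ≤ s₀ * C :=
      mul_le_mul ht0 (hC t (hsub ht)) (norm_nonneg _) (le_trans ht.1 ht.2)
    _ = C * s₀ := mul_comm _ _
  have key := (convex_Icc (0:ℝ) s₀).norm_image_sub_le_of_norm_hasDerivWithin_le
    hρd hb (left_mem_Icc.2 hs₀.1) (right_mem_Icc.2 hs₀.1)
  have h0 : (0:ℝ) * g1 0 - g 0 = 0 := by simp [hgdef]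
  rw [h0, sub_zero, sub_zero] at key
  calc |s₀ * g1 s₀ - g s₀| ≤ C * s₀ * ‖s₀‖ := key
  _ = C * s₀^2 := by rw [Real.norm_eq_abs, abs_of_nonneg hs₀.1]; ring

set_option maxHeartbeats 2000000 in
lemma key_identity (hU : IsOpen U) (hu : ContDiffOn ℝ 2 u U)
    (x : EuclideanSpace ℝ (Fin 2)) {R : ℝ} (hR : 0 < R)
    (hUball : Metric.closedBall x R ⊆ U)
    (c d : ℝ) (hcd : c^2 + d^2 = 1) (e₁ e₂ : EuclideanSpace ℝ (Fin 2))
    (he₁ : e₁ = c • EuclideanSpace.single 0 1 + d • EuclideanSpace.single 1 1)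
    (he₂ : e₂ = (-d) • EuclideanSpace.single 0 1 + c • EuclideanSpace.single 1 1) :
    ∫ s in (0:ℝ)..R, (1 - s^2/R^2) *
        (∫ θ in (0:ℝ)..(2*π), lap2 u (x + s • (cos θ • e₁ + sin θ • e₂)) * cos θ)
      = 2/R * (∫ θ in (0:ℝ)..(2*π), u (x + R • (cos θ • e₁ + sin θ • e₂)) * cos θ)
        - 2*π*(fderiv ℝ u x e₁) := by
  have hnorm : ∀ θ : ℝ, ‖cos θ • e₁ + sin θ • e₂‖ = 1 := by
    intro θ
    have hveq : cos θ • e₁ + sin θ • e₂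
        = (cos θ * c - sin θ * d) • EuclideanSpace.single 0 1
          + (cos θ * d + sin θ * c) • EuclideanSpace.single 1 1 := by
      rw [he₁, he₂]; module
    rw [hveq, norm_coord]
    have : (cos θ * c - sin θ * d)^2 + (cos θ * d + sin θ * c)^2 = 1 := by
      have := Real.cos_sq_add_sin_sq θ
      nlinarith [this, hcd]
    rw [this, Real.sqrt_one]
  have hball : ∀ s ∈ Icc (0:ℝ) R, ∀ θ : ℝ,
      x + s • (cos θ • e₁ + sin θ • e₂) ∈ Metric.closedBall x R := by
    intro s hs θ
    rw [Metric.mem_closedBall, dist_eq_norm, add_sub_cancel_left, norm_smul, hnorm,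
      Real.norm_eq_abs, abs_of_nonneg hs.1, mul_one]
    exact hs.2
  have hmem : ∀ s ∈ Icc (0:ℝ) R, ∀ θ : ℝ,
      x + s • (cos θ • e₁ + sin θ • e₂) ∈ U := fun s hs θ => hUball (hball s hs θ)
  -- uniform bound C on the second derivative over the closed ball
  obtain ⟨C, hC⟩ := (isCompact_closedBall x R).exists_bound_of_continuousOn
    (f := fderiv ℝ (fderiv ℝ u)) ((cont_d2 hU hu).mono hUball)
  have hC0 : 0 ≤ C := le_trans (norm_nonneg _)
    (hC x (Metric.mem_closedBall_self hR.le))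
  have hCapp : ∀ (y : EuclideanSpace ℝ (Fin 2)), y ∈ Metric.closedBall x R → ∀ θ : ℝ,
      ‖fderiv ℝ (fderiv ℝ u) y (cos θ • e₁ + sin θ • e₂) (cos θ • e₁ + sin θ • e₂)‖ ≤ C := by
    intro y hy θ
    calc ‖fderiv ℝ (fderiv ℝ u) y (cos θ • e₁ + sin θ • e₂) (cos θ • e₁ + sin θ • e₂)‖
        ≤ ‖fderiv ℝ (fderiv ℝ u) y (cos θ • e₁ + sin θ • e₂)‖ * ‖cos θ • e₁ + sin θ • e₂‖ :=
          ContinuousLinearMap.le_opNorm _ _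
      _ ≤ (‖fderiv ℝ (fderiv ℝ u) y‖ * ‖cos θ • e₁ + sin θ • e₂‖) * ‖cos θ • e₁ + sin θ • e₂‖ :=
          mul_le_mul_of_nonneg_right (ContinuousLinearMap.le_opNorm _ _) (norm_nonneg _)
      _ = ‖fderiv ℝ (fderiv ℝ u) y‖ := by rw [hnorm θ]; ring
      _ ≤ C := hC y hy
  -- the kernel K
  set K : ℝ → ℝ → ℝ := fun s θ =>
    fderiv ℝ (fderiv ℝ u) (x + s • (cos θ • e₁ + sin θ • e₂))
        (cos θ • e₁ + sin θ • e₂) (cos θ • e₁ + sin θ • e₂)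
      + fderiv ℝ u (x + s • (cos θ • e₁ + sin θ • e₂)) (cos θ • e₁ + sin θ • e₂) / s
      - (u (x + s • (cos θ • e₁ + sin θ • e₂)) - u x) / s^2 with hKdef
  -- Step A : rewrite the inner integral using J1
  have stepA : ∫ s in (0:ℝ)..R, (1 - s^2/R^2) *
        (∫ θ in (0:ℝ)..(2*π), lap2 u (x + s • (cos θ • e₁ + sin θ • e₂)) * cos θ)
      = ∫ s in (0:ℝ)..R, (1 - s^2/R^2) * (∫ θ in (0:ℝ)..(2*π), K s θ * cos θ) := by
    apply intervalIntegral.integral_congr_ae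
    filter_upwards with s hs
    rw [uIoc_of_le hR.le] at hs
    rw [J1 hU hu x c d hcd e₁ e₂ he₁ he₂ (ne_of_gt hs.1)
      (fun θ => hmem s ⟨hs.1.le, hs.2⟩ θ)]
  -- bound for K
  have hKbound : ∀ s ∈ Ioo (0:ℝ) R, ∀ θ : ℝ, |K s θ| ≤ 2*C := by
    intro s hs θ
    have hsic : s ∈ Icc (0:ℝ) R := ⟨hs.1.le, hs.2.le⟩
    have h2 : |fderiv ℝ (fderiv ℝ u) (x + s • (cos θ • e₁ + sin θ • e₂))
        (cos θ • e₁ + sin θ • e₂) (cos θ • e₁ + sin θ • e₂)| ≤ C :=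
      hCapp _ (hball s hsic θ) θ
    have hrho := rho_bound hU hu x (cos θ • e₁ + sin θ • e₂)
      (fun t ht => hmem t ht θ) (fun t ht => hCapp _ (hball t ht θ) θ) s hsic
    have h1 : |fderiv ℝ u (x + s • (cos θ • e₁ + sin θ • e₂)) (cos θ • e₁ + sin θ • e₂) / s
        - (u (x + s • (cos θ • e₁ + sin θ • e₂)) - u x) / s^2| ≤ C := by
      have hs0 : s ≠ 0 := ne_of_gt hs.1
      have heq : fderiv ℝ u (x + s • (cos θ • e₁ + sin θ • e₂)) (cos θ • e₁ + sin θ • e₂) / s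
          - (u (x + s • (cos θ • e₁ + sin θ • e₂)) - u x) / s^2
          = (s * fderiv ℝ u (x + s • (cos θ • e₁ + sin θ • e₂)) (cos θ • e₁ + sin θ • e₂)
            - (u (x + s • (cos θ • e₁ + sin θ • e₂)) - u x)) / s^2 := by
        field_simp
      rw [heq, abs_div, abs_of_nonneg (sq_nonneg s), div_le_iff₀ (by positivity)]
      exact hrho
    calc |K s θ| ≤ |fderiv ℝ (fderiv ℝ u) (x + s • (cos θ • e₁ + sin θ • e₂))
          (cos θ • e₁ + sin θ • e₂) (cos θ • e₁ + sin θ • e₂)|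
        + |fderiv ℝ u (x + s • (cos θ • e₁ + sin θ • e₂)) (cos θ • e₁ + sin θ • e₂) / s
          - (u (x + s • (cos θ • e₁ + sin θ • e₂)) - u x) / s^2| := by
          have hrw : K s θ
              = fderiv ℝ (fderiv ℝ u) (x + s • (cos θ • e₁ + sin θ • e₂))
                  (cos θ • e₁ + sin θ • e₂) (cos θ • e₁ + sin θ • e₂)
                + (fderiv ℝ u (x + s • (cos θ • e₁ + sin θ • e₂)) (cos θ • e₁ + sin θ • e₂) / s
                  - (u (x + s • (cos θ • e₁ + sin θ • e₂)) - u x) / s^2) := by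
            simp only [hKdef]
            ring
          rw [hrw]
          exact abs_add_le _ _
      _ ≤ C + C := add_le_add h2 h1
      _ = 2*C := by ring
  -- weight bound
  have hW1 : ∀ s ∈ Icc (0:ℝ) R, |1 - s^2/R^2| ≤ 1 := by
    intro s hs
    have hR2 : (0:ℝ) < R^2 := by positivity
    have ha : s^2/R^2 ≤ 1 := by
      rw [div_le_one hR2]
      nlinarith [hs.2, hs.1]
    have hb : 0 ≤ s^2/R^2 := by positivity
    rw [abs_le]
    constructor <;> linarith
  -- joint continuity
  have hycont : Continuous (fun z : ℝ × ℝ => x + z.1 • (cos z.2 • e₁ + sin z.2 • e₂)) := by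
    fun_prop
  have hmaps : ∀ z : ℝ × ℝ, z ∈ Ioo (0:ℝ) R ×ˢ Ioo (0:ℝ) (2*π) →
      (x + z.1 • (cos z.2 • e₁ + sin z.2 • e₂)) ∈ U :=
    fun z hz => hmem z.1 ⟨hz.1.1.le, hz.1.2.le⟩ z.2
  have hvz : Continuous fun z : ℝ × ℝ => cos z.2 • e₁ + sin z.2 • e₂ := by fun_prop
  have hKcont : ContinuousOn (fun z : ℝ × ℝ => (1 - z.1^2/R^2) * (K z.1 z.2 * cos z.2))
      (Ioo (0:ℝ) R ×ˢ Ioo (0:ℝ) (2*π)) := by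
    simp only [hKdef]
    apply ContinuousOn.mul (by fun_prop)
    apply ContinuousOn.mul _ (Continuous.continuousOn (by fun_prop))
    refine ContinuousOn.sub (ContinuousOn.add ?_ ?_) ?_
    · exact (((cont_d2 hU hu).comp hycont.continuousOn hmaps).clm_apply
        hvz.continuousOn).clm_apply hvz.continuousOn
    · exact (((cont_du hU hu).comp hycont.continuousOn hmaps).clm_apply
        hvz.continuousOn).div (continuous_fst.continuousOn) (fun z hz => ne_of_gt hz.1.1)
    · exact (((hu.continuousOn).comp hycont.continuousOn hmaps).sub continuousOn_const).div
        (by fun_prop) (fun z hz => pow_ne_zero 2 (ne_of_gt hz.1.1))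
  have hprodmeas : (volume.restrict (Ioo (0:ℝ) R)).prod (volume.restrict (Ioo (0:ℝ) (2*π)))
      = (volume.prod volume).restrict ((Ioo (0:ℝ) R) ×ˢ (Ioo (0:ℝ) (2*π))) :=
    Measure.prod_restrict _ _
  have hfin : (volume.prod volume) ((Ioo (0:ℝ) R) ×ˢ (Ioo (0:ℝ) (2*π))) < ⊤ := by
    rw [Measure.prod_prod]
    exact ENNReal.mul_lt_top measure_Ioo_lt_top measure_Ioo_lt_top
  have hFint : Integrable (Function.uncurry fun s θ => (1 - s^2/R^2) * (K s θ * cos θ))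
      ((volume.restrict (Ioo (0:ℝ) R)).prod (volume.restrict (Ioo (0:ℝ) (2*π)))) := by
    rw [hprodmeas]
    refine ⟨hKcont.aestronglyMeasurable (measurableSet_Ioo.prod measurableSet_Ioo), ?_⟩
    apply HasFiniteIntegral.restrict_of_bounded (C := 2*C) hfin
    refine (ae_restrict_iff' (measurableSet_Ioo.prod measurableSet_Ioo)).2
      (Filter.Eventually.of_forall ?_)
    rintro ⟨s, θ⟩ hz
    have h1 := hW1 s ⟨hz.1.1.le, hz.1.2.le⟩
    have h2 := hKbound s hz.1 θ
    have h3 : |cos θ| ≤ 1 := abs_cos_le_one θ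
    have hC0' : (0:ℝ) ≤ 2*C := by linarith
    calc ‖(1 - s^2/R^2) * (K s θ * cos θ)‖
        = |1 - s^2/R^2| * (|K s θ| * |cos θ|) := by
          rw [Real.norm_eq_abs, abs_mul, abs_mul]
      _ ≤ 1 * (2*C * 1) := by
          apply mul_le_mul h1 _ (by positivity) zero_le_one
          exact mul_le_mul h2 h3 (abs_nonneg _) hC0'
      _ = 2*C := by ring
  -- step B : iterated set integrals
  have stepB : ∫ s in (0:ℝ)..R, (1 - s^2/R^2) * (∫ θ in (0:ℝ)..(2*π), K s θ * cos θ)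
      = ∫ s in Ioo (0:ℝ) R, ∫ θ in Ioo (0:ℝ) (2*π), (1 - s^2/R^2) * (K s θ * cos θ) := by
    rw [intervalIntegral.integral_of_le hR.le, integral_Ioc_eq_integral_Ioo]
    congr 1
    funext s
    rw [intervalIntegral.integral_of_le (by positivity : (0:ℝ) ≤ 2*π),
      integral_Ioc_eq_integral_Ioo, ← MeasureTheory.integral_const_mul]
  have stepC := MeasureTheory.integral_integral_swap hFint
  -- step D : inner radial integral via L1
  have stepD : ∀ θ ∈ Ioo (0:ℝ) (2*π),
      (∫ s in Ioo (0:ℝ) R, (1 - s^2/R^2) * (K s θ * cos θ))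
      = cos θ * (2/R * (u (x + R • (cos θ • e₁ + sin θ • e₂)) - u x)
          - 2 * fderiv ℝ u x (cos θ • e₁ + sin θ • e₂)) := by
    intro θ _
    have hrw : (fun s => (1 - s^2/R^2) * (K s θ * cos θ))
        = fun s => cos θ * (K s θ * (1 - s^2/R^2)) := by
      funext s; ring
    rw [hrw, MeasureTheory.integral_const_mul, ← integral_Ioc_eq_integral_Ioo,
      ← intervalIntegral.integral_of_le hR.le]
    have hL := L1 hU hu x (cos θ • e₁ + sin θ • e₂) hR (fun t ht => hmem t ht θ)
    have hKrw : (fun s => K s θ * (1 - s^2/R^2))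
        = fun s => (fderiv ℝ (fderiv ℝ u) (x + s • (cos θ • e₁ + sin θ • e₂))
            (cos θ • e₁ + sin θ • e₂) (cos θ • e₁ + sin θ • e₂)
          + fderiv ℝ u (x + s • (cos θ • e₁ + sin θ • e₂)) (cos θ • e₁ + sin θ • e₂) / s
          - (u (x + s • (cos θ • e₁ + sin θ • e₂)) - u x) / s^2) * (1 - s^2/R^2) := by
      funext s
      simp only [hKdef]
    rw [hKrw, hL]
  rw [stepA, stepB, stepC, setIntegral_congr_fun measurableSet_Ioo stepD,
    ← integral_Ioc_eq_integral_Ioo, ← intervalIntegral.integral_of_le (by positivity : (0:ℝ) ≤ 2*π)]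
  -- final expansion of the outer integral
  have hexp : ∀ θ : ℝ, cos θ * (2/R * (u (x + R • (cos θ • e₁ + sin θ • e₂)) - u x)
        - 2 * fderiv ℝ u x (cos θ • e₁ + sin θ • e₂))
      = (2/R) * (u (x + R • (cos θ • e₁ + sin θ • e₂)) * cos θ)
        - ((2/R * u x) * cos θ + (2 * fderiv ℝ u x e₁) * cos θ^2
          + (2 * fderiv ℝ u x e₂) * (sin θ * cos θ)) := by
    intro θ
    have hlin : fderiv ℝ u x (cos θ • e₁ + sin θ • e₂)
        = cos θ * fderiv ℝ u x e₁ + sin θ * fderiv ℝ u x e₂ := by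
      rw [map_add, _root_.map_smul, _root_.map_smul]
      simp [smul_eq_mul]
    rw [hlin]
    ring
  rw [intervalIntegral.integral_congr (g := fun θ =>
    (2/R) * (u (x + R • (cos θ • e₁ + sin θ • e₂)) * cos θ)
      - ((2/R * u x) * cos θ + (2 * fderiv ℝ u x e₁) * cos θ^2
        + (2 * fderiv ℝ u x e₂) * (sin θ * cos θ))) (fun θ _ => hexp θ)]
  have huRc : Continuous fun θ => u (x + R • (cos θ • e₁ + sin θ • e₂)) :=
    (hu.continuousOn).comp_continuous (by fun_prop)
      (fun θ => hmem R (right_mem_Icc.2 hR.le) θ)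
  have hi1 : IntervalIntegrable (fun θ => (2/R) * (u (x + R • (cos θ • e₁ + sin θ • e₂)) * cos θ))
      volume 0 (2*π) :=
    (continuous_const.mul (huRc.mul Real.continuous_cos)).intervalIntegrable _ _
  have hi2 : IntervalIntegrable (fun θ => (2/R * u x) * cos θ + (2 * fderiv ℝ u x e₁) * cos θ^2
      + (2 * fderiv ℝ u x e₂) * (sin θ * cos θ)) volume 0 (2*π) := by
    apply Continuous.intervalIntegrable
    fun_prop
  rw [intervalIntegral.integral_sub hi1 hi2, intervalIntegral.integral_add
      (by apply Continuous.intervalIntegrable; fun_prop)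
      (by apply Continuous.intervalIntegrable; fun_prop),
    intervalIntegral.integral_add
      (by apply Continuous.intervalIntegrable; fun_prop)
      (by apply Continuous.intervalIntegrable; fun_prop),
    intervalIntegral.integral_const_mul, intervalIntegral.integral_const_mul,
    intervalIntegral.integral_const_mul, intervalIntegral.integral_const_mul,
    integral_cos_zero, integral_cos_sq', integral_sin_cos]
  ring
end S7
section S8
variable {u : EuclideanSpace ℝ (Fin 2) → ℝ} {U : Set (EuclideanSpace ℝ (Fin 2))}

set_option maxHeartbeats 1000000 in
lemma I_bound (hU : IsOpen U) (hu : ContDiffOn ℝ 2 u U)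
    (x : EuclideanSpace ℝ (Fin 2)) {R : ℝ} (hR : 0 < R)
    (hUball : Metric.closedBall x R ⊆ U)
    (e₁ e₂ : EuclideanSpace ℝ (Fin 2))
    (hnorm : ∀ θ : ℝ, ‖cos θ • e₁ + sin θ • e₂‖ = 1)
    {M : ℝ} (hM : ∀ y ∈ Metric.closedBall x R, |lap2 u y| ≤ M) :
    |∫ s in (0:ℝ)..R, (1 - s^2/R^2) *
        (∫ θ in (0:ℝ)..(2*π), lap2 u (x + s • (cos θ • e₁ + sin θ • e₂)) * cos θ)|
      ≤ M * (R * (2*π)) := by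
  have hball : ∀ s ∈ Icc (0:ℝ) R, ∀ θ : ℝ,
      x + s • (cos θ • e₁ + sin θ • e₂) ∈ Metric.closedBall x R := by
    intro s hs θ
    rw [Metric.mem_closedBall, dist_eq_norm, add_sub_cancel_left, norm_smul, hnorm,
      Real.norm_eq_abs, abs_of_nonneg hs.1, mul_one]
    exact hs.2
  have hmem : ∀ s ∈ Icc (0:ℝ) R, ∀ θ : ℝ,
      x + s • (cos θ • e₁ + sin θ • e₂) ∈ U := fun s hs θ => hUball (hball s hs θ)
  have hM0 : 0 ≤ M := le_trans (abs_nonneg _) (hM x (Metric.mem_closedBall_self hR.le))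
  have hW1 : ∀ s ∈ Icc (0:ℝ) R, |1 - s^2/R^2| ≤ 1 := by
    intro s hs
    have hR2 : (0:ℝ) < R^2 := by positivity
    have ha : s^2/R^2 ≤ 1 := by
      rw [div_le_one hR2]
      nlinarith [hs.2, hs.1]
    have hb : 0 ≤ s^2/R^2 := by positivity
    rw [abs_le]
    constructor <;> linarith
  have hycont : Continuous (fun z : ℝ × ℝ => x + z.1 • (cos z.2 • e₁ + sin z.2 • e₂)) := by
    fun_prop
  have hmaps : ∀ z : ℝ × ℝ, z ∈ Icc (0:ℝ) R ×ˢ Icc (0:ℝ) (2*π) →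
      (x + z.1 • (cos z.2 • e₁ + sin z.2 • e₂)) ∈ U :=
    fun z hz => hmem z.1 hz.1 z.2
  have hf0cont : ContinuousOn (fun z : ℝ × ℝ =>
      (1 - z.1^2/R^2) * (lap2 u (x + z.1 • (cos z.2 • e₁ + sin z.2 • e₂)) * cos z.2))
      (Icc (0:ℝ) R ×ˢ Icc (0:ℝ) (2*π)) := by
    apply ContinuousOn.mul (by fun_prop)
    exact (((cont_lap2 hU hu).comp hycont.continuousOn hmaps).mul
      (Continuous.continuousOn (by fun_prop)))
  have hInt : IntegrableOn (fun z : ℝ × ℝ =>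
      (1 - z.1^2/R^2) * (lap2 u (x + z.1 • (cos z.2 • e₁ + sin z.2 • e₂)) * cos z.2))
      (Icc (0:ℝ) R ×ˢ Icc (0:ℝ) (2*π)) (volume.prod volume) :=
    hf0cont.integrableOn_compact (isCompact_Icc.prod isCompact_Icc)
  have hInt' : IntegrableOn (fun z : ℝ × ℝ =>
      (1 - z.1^2/R^2) * (lap2 u (x + z.1 • (cos z.2 • e₁ + sin z.2 • e₂)) * cos z.2))
      (Ioo (0:ℝ) R ×ˢ Ioo (0:ℝ) (2*π)) (volume.prod volume) :=
    hInt.mono_set (Set.prod_mono Ioo_subset_Icc_self Ioo_subset_Icc_self)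
  have hprodmeas : (volume.restrict (Ioo (0:ℝ) R)).prod (volume.restrict (Ioo (0:ℝ) (2*π)))
      = (volume.prod volume).restrict ((Ioo (0:ℝ) R) ×ˢ (Ioo (0:ℝ) (2*π))) :=
    Measure.prod_restrict _ _
  have stepB : ∫ s in (0:ℝ)..R, (1 - s^2/R^2) *
        (∫ θ in (0:ℝ)..(2*π), lap2 u (x + s • (cos θ • e₁ + sin θ • e₂)) * cos θ)
      = ∫ s in Ioo (0:ℝ) R, ∫ θ in Ioo (0:ℝ) (2*π),
          (1 - s^2/R^2) * (lap2 u (x + s • (cos θ • e₁ + sin θ • e₂)) * cos θ) := by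
    rw [intervalIntegral.integral_of_le hR.le, integral_Ioc_eq_integral_Ioo]
    congr 1
    funext s
    rw [intervalIntegral.integral_of_le (by positivity : (0:ℝ) ≤ 2*π),
      integral_Ioc_eq_integral_Ioo, ← MeasureTheory.integral_const_mul]
  have hiter : ∫ s in Ioo (0:ℝ) R, ∫ θ in Ioo (0:ℝ) (2*π),
        (1 - s^2/R^2) * (lap2 u (x + s • (cos θ • e₁ + sin θ • e₂)) * cos θ)
      = ∫ z in (Ioo (0:ℝ) R) ×ˢ (Ioo (0:ℝ) (2*π)),
          (1 - z.1^2/R^2) * (lap2 u (x + z.1 • (cos z.2 • e₁ + sin z.2 • e₂)) * cos z.2)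
          ∂(volume.prod volume) := by
    rw [MeasureTheory.integral_integral (f := fun s θ =>
      (1 - s^2/R^2) * (lap2 u (x + s • (cos θ • e₁ + sin θ • e₂)) * cos θ))
      (by rw [hprodmeas]; exact hInt'), hprodmeas]
  rw [stepB, hiter]
  have hbd : ∀ z ∈ (Ioo (0:ℝ) R) ×ˢ (Ioo (0:ℝ) (2*π)),
      ‖(1 - z.1^2/R^2) * (lap2 u (x + z.1 • (cos z.2 • e₁ + sin z.2 • e₂)) * cos z.2)‖ ≤ M := by
    rintro ⟨s, θ⟩ hz
    have hsic : s ∈ Icc (0:ℝ) R := ⟨hz.1.1.le, hz.1.2.le⟩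
    have h1 := hW1 s hsic
    have h2 := hM _ (hball s hsic θ)
    have h3 : |cos θ| ≤ 1 := abs_cos_le_one θ
    calc ‖(1 - s^2/R^2) * (lap2 u (x + s • (cos θ • e₁ + sin θ • e₂)) * cos θ)‖
        = |1 - s^2/R^2| * (|lap2 u (x + s • (cos θ • e₁ + sin θ • e₂))| * |cos θ|) := by
          rw [Real.norm_eq_abs, abs_mul, abs_mul]
      _ ≤ 1 * (M * 1) := by
          apply mul_le_mul h1 _ (by positivity) zero_le_one
          exact mul_le_mul h2 h3 (abs_nonneg _) hM0
      _ = M := by ring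
  have hmeas : ((volume.prod volume) ((Ioo (0:ℝ) R) ×ˢ (Ioo (0:ℝ) (2*π)))).toReal
      = R * (2*π) := by
    rw [Measure.prod_prod, Real.volume_Ioo, Real.volume_Ioo, sub_zero, sub_zero,
      ENNReal.toReal_mul, ENNReal.toReal_ofReal hR.le,
      ENNReal.toReal_ofReal (by positivity)]
  calc |∫ z in (Ioo (0:ℝ) R) ×ˢ (Ioo (0:ℝ) (2*π)),
        (1 - z.1^2/R^2) * (lap2 u (x + z.1 • (cos z.2 • e₁ + sin z.2 • e₂)) * cos z.2)
        ∂(volume.prod volume)|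
      ≤ M * ((volume.prod volume) ((Ioo (0:ℝ) R) ×ˢ (Ioo (0:ℝ) (2*π)))).toReal :=
        norm_setIntegral_le_of_norm_le_const
          (lt_of_le_of_lt (measure_mono (Set.prod_mono Ioo_subset_Icc_self Ioo_subset_Icc_self))
            (by rw [Measure.prod_prod]; exact ENNReal.mul_lt_top measure_Icc_lt_top measure_Icc_lt_top))
          hbd
    _ = M * (R * (2*π)) := by rw [hmeas]

end S8
end Stmt10Aux

open Stmt10Aux in
set_option maxHeartbeats 1000000 in
theorem stmt10 (x : EuclideanSpace ℝ (Fin 2)) (R : ℝ) (hR : 0 < R)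
    (u : EuclideanSpace ℝ (Fin 2) → ℝ)
    (U : Set (EuclideanSpace ℝ (Fin 2))) (hU : IsOpen U)
    (hUball : Metric.closedBall x R ⊆ U)
    (hu : ContDiffOn ℝ 2 u U) :
    ‖gradient u x‖ ≤
      R * sSup ((fun y => |lap2 u y|) '' Metric.closedBall x R) +
        4 / (Real.pi * R) * sSup ((fun y => |u y|) '' Metric.sphere x R) := by
  classical
  have hpi : (0:ℝ) < π := Real.pi_pos
  set S := sSup ((fun y => |u y|) '' Metric.sphere x R) with hSdef
  set M := sSup ((fun y => |lap2 u y|) '' Metric.closedBall x R) with hMdef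
  have hsphere_sub : Metric.sphere x R ⊆ U :=
    fun y hy => hUball (Metric.sphere_subset_closedBall hy)
  have hbddS : BddAbove ((fun y => |u y|) '' Metric.sphere x R) :=
    ((isCompact_sphere x R).image_of_continuousOn
      ((hu.continuousOn.mono hsphere_sub).abs)).bddAbove
  have hS_le : ∀ y ∈ Metric.sphere x R, |u y| ≤ S :=
    fun y hy => le_csSup hbddS (Set.mem_image_of_mem _ hy)
  have hy₀ : x + R • (EuclideanSpace.single (0 : Fin 2) (1:ℝ)) ∈ Metric.sphere x R := by
    rw [Metric.mem_sphere, dist_eq_norm, add_sub_cancel_left, norm_smul,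
      EuclideanSpace.norm_single, Real.norm_eq_abs, abs_of_pos hR]
    simp
  have hS0 : 0 ≤ S := le_trans (abs_nonneg _) (hS_le _ hy₀)
  have hbddM : BddAbove ((fun y => |lap2 u y|) '' Metric.closedBall x R) :=
    ((isCompact_closedBall x R).image_of_continuousOn
      (((cont_lap2 hU hu).mono hUball).abs)).bddAbove
  have hM_le : ∀ y ∈ Metric.closedBall x R, |lap2 u y| ≤ M :=
    fun y hy => le_csSup hbddM (Set.mem_image_of_mem _ hy)
  have hM0 : 0 ≤ M :=
    le_trans (abs_nonneg _) (hM_le x (Metric.mem_closedBall_self hR.le))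
  by_cases hg : gradient u x = 0
  · rw [hg, norm_zero]
    have h1 : (0:ℝ) ≤ R * M := mul_nonneg hR.le hM0
    have h2 : (0:ℝ) ≤ 4 / (π * R) * S := mul_nonneg (by positivity) hS0
    linarith
  · have hnG : 0 < ‖gradient u x‖ := norm_pos_iff.2 hg
    set e₁ : EuclideanSpace ℝ (Fin 2) := ‖gradient u x‖⁻¹ • gradient u x with he₁def
    have hne : ‖e₁‖ = 1 := by
      rw [he₁def, norm_smul, norm_inv, norm_norm, inv_mul_cancel₀ hnG.ne']
    set c : ℝ := e₁ 0 with hcdef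
    set d : ℝ := e₁ 1 with hddef
    have he₁ : e₁ = c • EuclideanSpace.single 0 1 + d • EuclideanSpace.single 1 1 :=
      coord_decomp e₁
    have hcd : c^2 + d^2 = 1 := by
      have h := hne
      rw [he₁, norm_coord] at h
      have h2 := Real.sq_sqrt (show (0:ℝ) ≤ c^2 + d^2 by positivity)
      rw [h] at h2
      simpa using h2.symm
    set e₂ : EuclideanSpace ℝ (Fin 2) :=
      (-d) • EuclideanSpace.single 0 1 + c • EuclideanSpace.single 1 1 with he₂def
    have hnorm : ∀ θ : ℝ, ‖cos θ • e₁ + sin θ • e₂‖ = 1 := by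
      intro θ
      have hveq : cos θ • e₁ + sin θ • e₂
          = (cos θ * c - sin θ * d) • EuclideanSpace.single 0 1
            + (cos θ * d + sin θ * c) • EuclideanSpace.single 1 1 := by
        rw [he₁, he₂def]; module
      rw [hveq, norm_coord]
      have hone : (cos θ * c - sin θ * d)^2 + (cos θ * d + sin θ * c)^2 = 1 := by
        have := Real.cos_sq_add_sin_sq θ
        nlinarith [this, hcd]
      rw [hone, Real.sqrt_one]
    have hKey := key_identity hU hu x hR hUball c d hcd e₁ e₂ he₁ he₂def
    -- the directional derivative equals the norm of the gradient
    have hfd : fderiv ℝ u x e₁ = ‖gradient u x‖ := by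
      have h1 : (inner ℝ (gradient u x) e₁ : ℝ) = fderiv ℝ u x e₁ :=
        InnerProductSpace.toDual_symm_apply
      rw [← h1, he₁def, real_inner_smul_right, real_inner_self_eq_norm_mul_norm]
      field_simp
    rw [hfd] at hKey
    -- bound the boundary integral
    have hsph : ∀ θ : ℝ, x + R • (cos θ • e₁ + sin θ • e₂) ∈ Metric.sphere x R := by
      intro θ
      rw [Metric.mem_sphere, dist_eq_norm, add_sub_cancel_left, norm_smul, hnorm,
        Real.norm_eq_abs, abs_of_pos hR, mul_one]
    have huRc : Continuous fun θ => u (x + R • (cos θ • e₁ + sin θ • e₂)) :=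
      (hu.continuousOn).comp_continuous (by fun_prop)
        (fun θ => hsphere_sub (hsph θ))
    have hA : |∫ θ in (0:ℝ)..(2*π), u (x + R • (cos θ • e₁ + sin θ • e₂)) * cos θ| ≤ 4 * S := by
      calc |∫ θ in (0:ℝ)..(2*π), u (x + R • (cos θ • e₁ + sin θ • e₂)) * cos θ|
          ≤ ∫ θ in (0:ℝ)..(2*π), |u (x + R • (cos θ • e₁ + sin θ • e₂)) * cos θ| :=
            intervalIntegral.abs_integral_le_integral_abs (by positivity)
        _ ≤ ∫ θ in (0:ℝ)..(2*π), S * |cos θ| := by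
            apply intervalIntegral.integral_mono_on (by positivity)
              ((huRc.mul Real.continuous_cos).abs.intervalIntegrable _ _)
              ((continuous_const.mul Real.continuous_cos.abs).intervalIntegrable _ _)
            intro θ _
            simp only [Pi.mul_apply]
            rw [abs_mul]
            exact mul_le_mul_of_nonneg_right (hS_le _ (hsph θ)) (abs_nonneg _)
        _ = S * ∫ θ in (0:ℝ)..(2*π), |cos θ| := intervalIntegral.integral_const_mul _ _
        _ = 4 * S := by rw [integral_abs_cos]; ring
    have hI := I_bound hU hu x hR hUball e₁ e₂ hnorm hM_le
    -- assemble
    set A := ∫ θ in (0:ℝ)..(2*π), u (x + R • (cos θ • e₁ + sin θ • e₂)) * cos θ with hAdef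
    set I := ∫ s in (0:ℝ)..R, (1 - s^2/R^2) *
        (∫ θ in (0:ℝ)..(2*π), lap2 u (x + s • (cos θ • e₁ + sin θ • e₂)) * cos θ) with hIdef
    have hIneq : 2*π*‖gradient u x‖ ≤ 2/R * (4*S) + M * (R * (2*π)) := by
      have h1 : 2*π*‖gradient u x‖ = 2/R * A - I := by rw [hKey]; ring
      have h2 : 2/R * A - I ≤ 2/R * |A| + |I| := by
        have ha : 2/R * A ≤ 2/R * |A| :=
          mul_le_mul_of_nonneg_left (le_abs_self A) (by positivity)
        have hb : -I ≤ |I| := neg_le_abs I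
        linarith
      have h3 : 2/R * |A| ≤ 2/R * (4*S) :=
        mul_le_mul_of_nonneg_left hA (by positivity)
      linarith
    have hfinal : ‖gradient u x‖ ≤ (2/R * (4*S) + M * (R * (2*π))) / (2*π) := by
      rw [le_div_iff₀ (by positivity : (0:ℝ) < 2*π)]
      calc ‖gradient u x‖ * (2*π) = 2*π*‖gradient u x‖ := by ring
        _ ≤ _ := hIneq
    calc ‖gradient u x‖ ≤ (2/R * (4*S) + M * (R * (2*π))) / (2*π) := hfinal
      _ = R * M + 4 / (π * R) * S := by field_simp; ring
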